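/- If C is a finite collection of congruences covering the integers, whose moduli are distinct divisors greater than 1 of L = 2^{α_1} · 3^{α_2} · ⋯ (a number of the form p_1^{α_1}⋯p_{r−1}^{α_{r−1}} p_r from Sun's family) with lcm of moduli equal to L, and if among the moduli not divisible by any prime larger than p_s and exactly divisible by p_s^t, there are exactly p_s − 1 congruences filling all but one residue class (λ_{s,α_s} = 1 uncovered class remains modulo p_1^{α_1}⋯p_s^{α_s}), then the number of uncovered classes modulo p_1^{α_1}⋯p_s^{α_s}p_{s+1} equals p_{s+1} minus the number of congruences in C whose modulus is exactly divisible by p_{s+1} and not divisible by any larger prime, provided C is minimal. -/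

import Mathlib

/-- A finite set of congruences `(x, m)` covers all the integers. -/
def CoversAll (S : Finset (ℕ × ℕ)) : Prop :=
  ∀ z : ℤ, ∃ c ∈ S, (c.2 : ℤ) ∣ z - (c.1 : ℤ)

/-- The moduli appearing in `S` are pairwise distinct. -/
def DistinctModuli (S : Finset (ℕ × ℕ)) : Prop :=
  ∀ c ∈ S, ∀ c' ∈ S, c.2 = c'.2 → c = c'

/-- `L` is a covering number: there is a covering system whose moduli are
distinct divisors of `L` greater than `1`. -/
def IsCoveringNumber (L : ℕ) : Prop :=
  ∃ S : Finset (ℕ × ℕ), CoversAll S ∧ DistinctModuli S ∧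
    ∀ c ∈ S, 1 < c.2 ∧ c.2 ∣ L

/-- `L` is a primitive covering number. -/
def IsPrimitiveCoveringNumber (L : ℕ) : Prop :=
  IsCoveringNumber L ∧ ∀ d : ℕ, d ∣ L → d ≠ L → ¬ IsCoveringNumber d

/-- `Cpow C r p s t` is the set of congruences in `C` whose modulus is exactly
divisible by `p s ^ t` and not divisible by `p k` for any `s < k ≤ r`. -/
def Cpow (C : Finset (ℕ × ℕ)) (r : ℕ) (p : ℕ → ℕ) (s t : ℕ) : Finset (ℕ × ℕ) :=
  C.filter (fun c => p s ^ t ∣ c.2 ∧ ¬ p s ^ (t + 1) ∣ c.2 ∧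
    ∀ k ∈ Finset.Ioc s r, ¬ p k ∣ c.2)

/-- The union `⋃_{i<s} ⋃_{j ≤ α i} C_{p_i^j} ∪ ⋃_{j ≤ t} C_{p_s^j}`. -/
def lowerCs (C : Finset (ℕ × ℕ)) (r : ℕ) (p α : ℕ → ℕ) (s t : ℕ) :
    Finset (ℕ × ℕ) :=
  (Finset.Ico 1 s).biUnion
      (fun i => (Finset.Icc 1 (α i)).biUnion (fun j => Cpow C r p i j)) ∪
    (Finset.Icc 1 t).biUnion (fun j => Cpow C r p s j)

/-- `lam C r p α s t` is `λ_{s,t}`: the number of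
`n ∈ {1, …, p_1^{α_1} ⋯ p_{s-1}^{α_{s-1}} p_s^t}` not covered by `lowerCs`. -/
def lam (C : Finset (ℕ × ℕ)) (r : ℕ) (p α : ℕ → ℕ) (s t : ℕ) : ℕ :=
  ((Finset.Icc 1 ((∏ i ∈ Finset.Ico 1 s, p i ^ α i) * p s ^ t)).filter
    (fun n => ∀ c ∈ lowerCs C r p α s t, n % c.2 ≠ c.1 % c.2)).card

theorem lambda_step_next_prime
    (r : ℕ) (hr : 2 ≤ r) (p α : ℕ → ℕ)
    (hprime : ∀ i ∈ Finset.Icc 1 r, (p i).Prime)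
    (hmono : ∀ i, 1 ≤ i → i < r → p i < p (i + 1))
    (hp1 : p 1 = 2)
    (hcong : ∀ t, 1 ≤ t → t ≤ r - 2 → p (t + 1) % (p t - 1) = 1)
    (hlast : (p (r - 1) - 2) * (p (r - 1) - 3) ≤ p r)
    (hα : ∀ i, 1 ≤ i → i ≤ r - 2 → α i = (p (i + 1) - 1) / (p i - 1) - 1)
    (hαpenult : α (r - 1) = (p r - 1) / (p (r - 1) - 1))
    (hαlast : α r = 1)
    (C : Finset (ℕ × ℕ))
    (hcov : CoversAll C) (hdist : DistinctModuli C)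
    (hmod : ∀ c ∈ C, 1 < c.2 ∧ c.2 ∣ ∏ i ∈ Finset.Icc 1 r, p i ^ α i)
    (hlcm : (C.image Prod.snd).lcm id = ∏ i ∈ Finset.Icc 1 r, p i ^ α i)
    (hmin : ∀ D ⊂ C, ¬ CoversAll D)
    (s : ℕ) (hs1 : 1 ≤ s) (hsr : s < r)
    (hlam : lam C r p α s (α s) = 1) :
    lam C r p α (s + 1) 1 = p (s + 1) - (Cpow C r p (s + 1) 1).card := by
  classical
  set L := ∏ i ∈ Finset.Icc 1 r, p i ^ α i with hL
  set P := ∏ i ∈ Finset.Ico 1 (s+1), p i ^ α i with hP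
  set q := p (s+1) with hqdef
  set A := lowerCs C r p α s (α s) with hA
  set B := Cpow C r p (s+1) 1 with hB
  have hsr' : s + 1 ≤ r := hsr
  have hqprime : q.Prime := hprime (s+1) (Finset.mem_Icc.mpr ⟨by omega, hsr'⟩)
  have hqpos : 0 < q := hqprime.pos
  -- strict monotonicity of p on [1, r]
  have hmono' : ∀ i j, 1 ≤ i → i < j → j ≤ r → p i < p j := by
    intro i j hi hij hjr
    induction j with
    | zero => omega
    | succ j ih =>
      rcases Nat.lt_or_ge i j with h | h
      · exact lt_trans (ih h (by omega)) (hmono j (by omega) (by omega))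
      · have : i = j := by omega
        subst this
        exact hmono i hi (by omega)
  have hppos : ∀ i ∈ Finset.Icc 1 r, 0 < p i := fun i hi => (hprime i hi).pos
  have hPpos : 0 < P := by
    rw [hP]
    apply Finset.prod_pos
    intro i hi
    rw [Finset.mem_Ico] at hi
    exact pow_pos (hppos i (Finset.mem_Icc.mpr ⟨hi.1, by omega⟩)) _
  have hqndvdP : ¬ q ∣ P := by
    intro hdvd
    rw [hP] at hdvd
    obtain ⟨i, hi, hdvd⟩ := hqprime.prime.exists_mem_finset_dvd hdvd
    rw [Finset.mem_Ico] at hi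
    have : q ∣ p i := hqprime.dvd_of_dvd_pow hdvd
    have hpiprime : (p i).Prime := hprime i (Finset.mem_Icc.mpr ⟨hi.1, by omega⟩)
    have : q = p i := ((Nat.prime_dvd_prime_iff_eq hqprime hpiprime).mp this)
    have : p i < q := hmono' i (s+1) hi.1 (by omega) hsr'
    omega
  -- decomposition of L
  have hLsplit : L = P * ∏ i ∈ Finset.Ioc s r, p i ^ α i := by
    rw [hL, hP, Finset.Ico_add_one_right_eq_Icc,
      show Finset.Icc 1 r = Finset.Ioc 0 r from by rw [← Finset.Icc_add_one_left_eq_Ioc, zero_add],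
      show Finset.Icc 1 s = Finset.Ioc 0 s from by rw [← Finset.Icc_add_one_left_eq_Ioc, zero_add]]
    exact (Finset.prod_Ioc_consecutive _ (Nat.zero_le s) (le_of_lt hsr)).symm
  have hIocsplit : ∏ i ∈ Finset.Ioc s r, p i ^ α i
      = q ^ α (s+1) * ∏ i ∈ Finset.Ioc (s+1) r, p i ^ α i := by
    rw [← Finset.prod_Ioc_consecutive _ (Nat.le_succ s) hsr']
    congr 1
    rw [Nat.Ioc_succ_singleton, Finset.prod_singleton]
  -- coprimality helper
  have hcopIoc : ∀ m : ℕ, ∀ a : ℕ, (∀ k ∈ Finset.Ioc a r, ¬ p k ∣ m) →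
      Nat.Coprime m (∏ i ∈ Finset.Ioc a r, p i ^ α i) := by
    intro m a hnd
    apply Nat.Coprime.prod_right
    intro i hi
    have hi' := Finset.mem_Ioc.mp hi
    have hpi : (p i).Prime := hprime i (Finset.mem_Icc.mpr ⟨by omega, hi'.2⟩)
    exact (Nat.Coprime.pow_right _ (((hpi.coprime_iff_not_dvd).mpr (hnd i hi)).symm))
  -- moduli of A divide P
  have hAmem : ∀ c ∈ A, c ∈ C ∧ ∃ i, 1 ≤ i ∧ i ≤ s ∧ ∀ k ∈ Finset.Ioc i r, ¬ p k ∣ c.2 := by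
    intro c hc
    rw [hA, lowerCs, Finset.mem_union] at hc
    rcases hc with hc | hc
    · rw [Finset.mem_biUnion] at hc
      obtain ⟨i, hi, hc⟩ := hc
      rw [Finset.mem_biUnion] at hc
      obtain ⟨j, _, hc⟩ := hc
      rw [Cpow, Finset.mem_filter] at hc
      have hi' := Finset.mem_Ico.mp hi
      exact ⟨hc.1, i, hi'.1, by omega, hc.2.2.2⟩
    · rw [Finset.mem_biUnion] at hc
      obtain ⟨j, _, hc⟩ := hc
      rw [Cpow, Finset.mem_filter] at hc
      exact ⟨hc.1, s, hs1, le_refl s, hc.2.2.2⟩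
  have hAsubC : ∀ c ∈ A, c ∈ C := fun c hc => (hAmem c hc).1
  have hAdvdP : ∀ c ∈ A, c.2 ∣ P := by
    intro c hc
    obtain ⟨hcC, i, hi1, his, hnd⟩ := hAmem c hc
    have hcop : Nat.Coprime c.2 (∏ k ∈ Finset.Ioc s r, p k ^ α k) :=
      hcopIoc c.2 s (fun k hk => hnd k (by
        rw [Finset.mem_Ioc] at hk ⊢
        omega))
    have hdvdL : c.2 ∣ L := (hmod c hcC).2
    rw [hLsplit] at hdvdL
    exact hcop.dvd_of_dvd_mul_right hdvdL
  have hBsubC : ∀ c ∈ B, c ∈ C := fun c hc => (Finset.mem_filter.mp hc).1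
  have hBq : ∀ c ∈ B, q ∣ c.2 := by
    intro c hc
    have := (Finset.mem_filter.mp hc).2.1
    simpa using this
  have hBdvdPq : ∀ c ∈ B, c.2 ∣ P * q := by
    intro c hc
    rw [hB, Cpow, Finset.mem_filter] at hc
    obtain ⟨hcC, hq1, hq2, hnd⟩ := hc
    have hdvdL : c.2 ∣ L := (hmod c hcC).2
    rw [hLsplit, hIocsplit, ← mul_assoc] at hdvdL
    have hcop : Nat.Coprime c.2 (∏ k ∈ Finset.Ioc (s+1) r, p k ^ α k) :=
      hcopIoc c.2 (s+1) hnd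
    have h1 : c.2 ∣ P * q ^ α (s+1) := hcop.dvd_of_dvd_mul_right hdvdL
    have hc2pos : c.2 ≠ 0 := by have := (hmod c hcC).1; omega
    set e := c.2.factorization q with he
    have he1 : e ≤ 1 := by
      by_contra h
      exact hq2 (by
        have := (Nat.Prime.pow_dvd_iff_le_factorization hqprime hc2pos).mpr
          (show 1 + 1 ≤ e by omega)
        simpa using this)
    set u := c.2 / q ^ e with hu
    have huc : q ^ e * u = c.2 := Nat.ordProj_mul_ordCompl_eq_self c.2 q
    have hqu : ¬ q ∣ u := Nat.not_dvd_ordCompl hqprime hc2pos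
    have hudvd : u ∣ P * q ^ α (s+1) := dvd_trans ⟨q ^ e, by rw [mul_comm, huc]⟩ h1
    have hucop : Nat.Coprime u (q ^ α (s+1)) :=
      Nat.Coprime.pow_right _ ((hqprime.coprime_iff_not_dvd).mpr hqu).symm
    have huP : u ∣ P := hucop.dvd_of_dvd_mul_right hudvd
    have hqe : q ^ e ∣ q := by
      have : q ^ e ∣ q ^ 1 := pow_dvd_pow q he1
      simpa using this
    calc c.2 = q ^ e * u := huc.symm
      _ ∣ q * P := mul_dvd_mul hqe huP
      _ = P * q := mul_comm q P
  have hAneB : ∀ a ∈ A, ∀ c ∈ B, a ≠ c := by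
    intro a ha c hc h
    exact hqndvdP (dvd_trans (h ▸ hBq c hc) (hAdvdP a ha))
  -- translate mod conditions to ℤ
  have hmodZ : ∀ (n : ℕ) (c : ℕ × ℕ), (n % c.2 = c.1 % c.2) ↔ (c.2:ℤ) ∣ (n:ℤ) - (c.1:ℤ) := by
    intro n c
    constructor
    · intro h
      have : n ≡ c.1 [MOD c.2] := h
      rw [Nat.modEq_iff_dvd] at this
      exact (dvd_sub_comm).mp this
    · intro h
      have : n ≡ c.1 [MOD c.2] := Nat.modEq_iff_dvd.mpr ((dvd_sub_comm).mpr h)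
      exact this
  -- extract n0
  have hlam' : ((Finset.Icc 1 P).filter
      (fun n => ∀ c ∈ A, n % c.2 ≠ c.1 % c.2)).card = 1 := by
    have hPs : (∏ i ∈ Finset.Ico 1 s, p i ^ α i) * p s ^ α s = P := by
      rw [hP, Finset.prod_Ico_succ_top hs1]
    unfold lam at hlam
    rw [hPs] at hlam
    rw [hA]
    convert hlam using 2
  obtain ⟨n0, hn0⟩ := Finset.card_eq_one.mp hlam'
  have hn0mem : n0 ∈ Finset.Icc 1 P ∧ ∀ c ∈ A, n0 % c.2 ≠ c.1 % c.2 := by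
    have : n0 ∈ (Finset.Icc 1 P).filter (fun n => ∀ c ∈ A, n % c.2 ≠ c.1 % c.2) := by
      rw [hn0]; exact Finset.mem_singleton_self n0
    exact ⟨(Finset.mem_filter.mp this).1, (Finset.mem_filter.mp this).2⟩
  have hn0uniq : ∀ n ∈ Finset.Icc 1 P, (∀ c ∈ A, n % c.2 ≠ c.1 % c.2) → n = n0 := by
    intro n hn h
    have : n ∈ (Finset.Icc 1 P).filter (fun n => ∀ c ∈ A, n % c.2 ≠ c.1 % c.2) :=
      Finset.mem_filter.mpr ⟨hn, h⟩
    rw [hn0] at this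
    exact Finset.mem_singleton.mp this
  -- key: integers uncovered by A are ≡ n0 mod P
  have keyZ : ∀ z : ℤ, (∀ a ∈ A, ¬ (a.2:ℤ) ∣ z - (a.1:ℤ)) → (P:ℤ) ∣ z - (n0:ℤ) := by
    intro z hz
    have hP0 : (0:ℤ) < (P:ℤ) := by exact_mod_cast hPpos
    set w := z % (P:ℤ) with hw
    have hw0 : 0 ≤ w := Int.emod_nonneg z (by omega)
    have hwP : w < (P:ℤ) := Int.emod_lt_of_pos z hP0
    set n : ℕ := if w = 0 then P else w.toNat with hn
    have hnmem : n ∈ Finset.Icc 1 P := by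
      rw [Finset.mem_Icc, hn]
      split_ifs with h
      · omega
      · have h1 : (w.toNat : ℤ) = w := Int.toNat_of_nonneg hw0
        omega
    have hzw : (P:ℤ) ∣ z - w := ⟨z / (P:ℤ), by
      have := Int.mul_ediv_add_emod z (P:ℤ)
      omega⟩
    have hdvdn : (P:ℤ) ∣ z - (n:ℤ) := by
      have h2 : (P:ℤ) ∣ w - (n:ℤ) := by
        rw [hn]
        split_ifs with h
        · rw [h]
          exact ⟨-1, by push_cast; ring⟩
        · rw [Int.toNat_of_nonneg hw0]
          simp
      have h3 := dvd_add hzw h2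
      convert h3 using 1
      rfl
      ring
    have huncov : ∀ c ∈ A, n % c.2 ≠ c.1 % c.2 := by
      intro c hc h
      apply hz c hc
      have h1 : (c.2:ℤ) ∣ (n:ℤ) - (c.1:ℤ) := (hmodZ n c).mp h
      have h2 : (c.2:ℤ) ∣ z - (n:ℤ) :=
        dvd_trans (by exact_mod_cast hAdvdP c hc) hdvdn
      have := dvd_add h2 h1
      simpa using this
    have hnn0 : n = n0 := hn0uniq n hnmem huncov
    rw [← hnn0]
    exact hdvdn
  -- hits
  set hits : ℕ × ℕ → ℕ → Prop := fun c k => (n0 + k * P) % c.2 = c.1 % c.2 with hitsdef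
  have hqpz : Prime (q:ℤ) := Nat.prime_iff_prime_int.mp hqprime
  have claimB : ∀ c ∈ B, ∀ k k', k < q → k' < q → hits c k → hits c k' → k = k' := by
    intro c hc k k' hk hk' h1 h2
    have d1 : (c.2:ℤ) ∣ ((n0 + k * P : ℕ):ℤ) - (c.1:ℤ) := (hmodZ _ _).mp h1
    have d2 : (c.2:ℤ) ∣ ((n0 + k' * P : ℕ):ℤ) - (c.1:ℤ) := (hmodZ _ _).mp h2
    have d3 : (c.2:ℤ) ∣ ((k:ℤ) - k') * P := by
      have := dvd_sub d1 d2
      convert this using 1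
      rfl
      push_cast
      ring
    have hqc : (q:ℤ) ∣ (c.2:ℤ) := by exact_mod_cast hBq c hc
    have d4 : (q:ℤ) ∣ ((k:ℤ) - k') * P := dvd_trans hqc d3
    have d5 : (q:ℤ) ∣ (k:ℤ) - k' := by
      rcases hqpz.dvd_mul.mp d4 with h | h
      · exact h
      · exact absurd (by exact_mod_cast h) hqndvdP
    obtain ⟨t, ht⟩ := d5
    have hkz : (k:ℤ) < (q:ℤ) := by exact_mod_cast hk
    have hkz' : (k':ℤ) < (q:ℤ) := by exact_mod_cast hk'
    have hk0 : (0:ℤ) ≤ (k:ℤ) := Int.natCast_nonneg k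
    have hk0' : (0:ℤ) ≤ (k':ℤ) := Int.natCast_nonneg k'
    have hqz : (0:ℤ) ≤ (q:ℤ) := Int.natCast_nonneg q
    have ht' : t = 0 := by
      rcases lt_trichotomy t 0 with h | h | h
      · have h2 : (q:ℤ) * t ≤ (q:ℤ) * (-1) :=
          mul_le_mul_of_nonneg_left (by omega) hqz
        linarith
      · exact h
      · have h2 : (q:ℤ) * 1 ≤ (q:ℤ) * t :=
          mul_le_mul_of_nonneg_left (by omega) hqz
        linarith
    rw [ht', mul_zero] at ht
    have : (k:ℤ) = (k':ℤ) := by linarith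
    exact_mod_cast this
  have hlift : ∀ c ∈ B, ∀ z : ℤ, (c.2:ℤ) ∣ z - (c.1:ℤ) → (P:ℤ) ∣ z - (n0:ℤ) →
      ∃ k, k < q ∧ hits c k ∧ ((P:ℤ) * q ∣ z - ((n0 + k * P : ℕ):ℤ)) := by
    intro c hc z hz hzn0
    obtain ⟨t, ht⟩ := hzn0
    have hq0 : (0:ℤ) < (q:ℤ) := by exact_mod_cast hqpos
    have ht0 : 0 ≤ t % (q:ℤ) := Int.emod_nonneg t (by omega)
    have htq : t % (q:ℤ) < (q:ℤ) := Int.emod_lt_of_pos t hq0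
    set k := (t % (q:ℤ)).toNat with hk
    have hkc : (k:ℤ) = t % (q:ℤ) := Int.toNat_of_nonneg ht0
    have hkq : k < q := by omega
    have hde : q * (t / (q:ℤ)) + t % (q:ℤ) = t := Int.mul_ediv_add_emod t (q:ℤ)
    have hdvd : (P:ℤ) * q ∣ z - ((n0 + k * P : ℕ):ℤ) := by
      refine ⟨t / (q:ℤ), ?_⟩
      push_cast
      have hzval : z = (n0:ℤ) + (P:ℤ) * t := by linarith [ht]
      rw [hzval, hkc]
      linear_combination (-(P:ℤ)) * hde
    refine ⟨k, hkq, ?_, hdvd⟩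
    apply (hmodZ _ _).mpr
    have h1 : (c.2:ℤ) ∣ ((n0 + k * P : ℕ):ℤ) - z := by
      refine dvd_trans ?_ (dvd_sub_comm.mp hdvd)
      have h2 := hBdvdPq c hc
      have : (c.2:ℤ) ∣ ((P * q : ℕ):ℤ) := by exact_mod_cast h2
      push_cast at this
      exact this
    have h3 := dvd_add h1 hz
    convert h3 using 1
    rfl
    ring
  have main : ∀ c ∈ B,
      (∀ z : ℤ, (c.2:ℤ) ∣ z - (c.1:ℤ) → (∀ a ∈ A, ¬ (a.2:ℤ) ∣ z - (a.1:ℤ)) →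
        ∃ c'' ∈ C.erase c, (c''.2:ℤ) ∣ z - (c''.1:ℤ)) → False := by
    intro c hc hcase
    apply hmin (C.erase c) (Finset.erase_ssubset (hBsubC c hc))
    intro z
    obtain ⟨c', hc', hdvd⟩ := hcov z
    by_cases hcc : c' = c
    · subst hcc
      by_cases hAcov : ∀ a ∈ A, ¬ (a.2:ℤ) ∣ z - (a.1:ℤ)
      · exact hcase z hdvd hAcov
      · push_neg at hAcov
        obtain ⟨a, ha, hadvd⟩ := hAcov
        exact ⟨a, Finset.mem_erase.mpr ⟨hAneB a ha c' hc, hAsubC a ha⟩, hadvd⟩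
    · exact ⟨c', Finset.mem_erase.mpr ⟨hcc, hc'⟩, hdvd⟩
  have claimA : ∀ c ∈ B, ∃ k, k < q ∧ hits c k := by
    intro c hc
    by_contra hno
    push_neg at hno
    apply main c hc
    intro z hz hAz
    exfalso
    obtain ⟨k, hk, hhit, _⟩ := hlift c hc z hz (keyZ z hAz)
    exact hno k hk hhit
  have claimC : ∀ c ∈ B, ∀ c' ∈ B, ∀ k, k < q → hits c k → hits c' k → c = c' := by
    intro c hc c' hc' k hk hhc hhc'
    by_contra hne
    apply main c hc
    intro z hz hAz
    obtain ⟨k'', hk'', hhit'', hdvd''⟩ := hlift c hc z hz (keyZ z hAz)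
    have : k'' = k := claimB c hc k'' k hk'' hk hhit'' hhc
    subst this
    refine ⟨c', Finset.mem_erase.mpr ⟨fun h => hne h.symm, hBsubC c' hc'⟩, ?_⟩
    have h1 : (c'.2:ℤ) ∣ z - ((n0 + k'' * P : ℕ):ℤ) :=
      dvd_trans (by exact_mod_cast hBdvdPq c' hc') hdvd''
    have h2 : (c'.2:ℤ) ∣ ((n0 + k'' * P : ℕ):ℤ) - (c'.1:ℤ) := (hmodZ _ _).mp hhc'
    have := dvd_add h1 h2
    simpa using this
  -- counting
  set T' := (Finset.range q).filter (fun k => ∃ c ∈ B, hits c k) with hT'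
  set T := (Finset.range q).filter (fun k => ¬ ∃ c ∈ B, hits c k) with hT
  have hTT' : T.card + T'.card = q := by
    have := Finset.card_filter_add_card_filter_not
      (s := Finset.range q) (p := fun k => ∃ c ∈ B, hits c k)
    rw [Finset.card_range] at this
    rw [hT, hT']
    omega
  have hT'card : T'.card = B.card := by
    apply Finset.card_bij (fun k hk => (Finset.mem_filter.mp hk).2.choose)
    · intro k hk
      exact (Finset.mem_filter.mp hk).2.choose_spec.1
    · intro k hk k' hk' heq
      have s1 := (Finset.mem_filter.mp hk).2.choose_spec
      have s2 := (Finset.mem_filter.mp hk').2.choose_spec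
      have hkq : k < q := Finset.mem_range.mp (Finset.mem_filter.mp hk).1
      have hkq' : k' < q := Finset.mem_range.mp (Finset.mem_filter.mp hk').1
      exact claimB _ s1.1 k k' hkq hkq' s1.2 (heq ▸ s2.2)
    · intro c hc
      obtain ⟨k, hkq, hhit⟩ := claimA c hc
      have hkT' : k ∈ T' := by
        rw [hT', Finset.mem_filter]
        exact ⟨Finset.mem_range.mpr hkq, c, hc, hhit⟩
      refine ⟨k, hkT', ?_⟩
      have s1 := (Finset.mem_filter.mp hkT').2.choose_spec
      exact claimC _ s1.1 c hc k hkq s1.2 hhit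
  have himage : ((Finset.Icc 1 (P * q)).filter
      (fun n => ∀ c ∈ lowerCs C r p α (s+1) 1, n % c.2 ≠ c.1 % c.2))
      = T.image (fun k => n0 + k * P) := by
    have hsplit : lowerCs C r p α (s+1) 1 = A ∪ B := by
      rw [hA, hB]
      ext c
      simp only [lowerCs, Finset.mem_union, Finset.mem_biUnion, Finset.mem_Ico, Finset.mem_Icc]
      constructor
      · rintro (⟨i, ⟨hi1, hi2⟩, j, hj, hc⟩ | ⟨j, hj, hc⟩)
        · rcases Nat.lt_succ_iff_lt_or_eq.mp hi2 with h | h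
          · exact Or.inl (Or.inl ⟨i, ⟨hi1, h⟩, j, hj, hc⟩)
          · subst h
            exact Or.inl (Or.inr ⟨j, hj, hc⟩)
        · have : j = 1 := by omega
          subst this
          exact Or.inr hc
      · rintro ((⟨i, ⟨hi1, hi2⟩, j, hj, hc⟩ | ⟨j, hj, hc⟩) | hc)
        · exact Or.inl ⟨i, ⟨hi1, by omega⟩, j, hj, hc⟩
        · exact Or.inl ⟨s, ⟨hs1, by omega⟩, j, hj, hc⟩
        · exact Or.inr ⟨1, by omega, hc⟩
    rw [hsplit]
    ext n
    simp only [Finset.mem_filter, Finset.mem_Icc, Finset.mem_image, Finset.mem_union, hT,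
      Finset.mem_range]
    constructor
    · rintro ⟨⟨hn1, hn2⟩, hcov'⟩
      have huncovA : ∀ c ∈ A, n % c.2 ≠ c.1 % c.2 := fun c hcA => hcov' c (Or.inl hcA)
      have huncovB : ∀ c ∈ B, n % c.2 ≠ c.1 % c.2 := fun c hcB => hcov' c (Or.inr hcB)
      have hzA : ∀ a ∈ A, ¬ (a.2:ℤ) ∣ (n:ℤ) - (a.1:ℤ) :=
        fun a ha h => huncovA a ha ((hmodZ n a).mpr h)
      obtain ⟨t, ht⟩ := keyZ (n:ℤ) hzA
      have hn01 : 1 ≤ n0 := (Finset.mem_Icc.mp hn0mem.1).1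
      have hn0P : n0 ≤ P := (Finset.mem_Icc.mp hn0mem.1).2
      have hc1 : (1:ℤ) ≤ (n:ℤ) := by exact_mod_cast hn1
      have hc2 : (n:ℤ) ≤ (P:ℤ) * q := by exact_mod_cast hn2
      have hc3 : (1:ℤ) ≤ (n0:ℤ) := by exact_mod_cast hn01
      have hc4 : (n0:ℤ) ≤ (P:ℤ) := by exact_mod_cast hn0P
      have hP0 : (0:ℤ) < (P:ℤ) := by exact_mod_cast hPpos
      have ht0 : 0 ≤ t := by
        rcases le_or_gt 0 t with h | h
        · exact h
        · exfalso
          have h2 : (P:ℤ) * t ≤ (P:ℤ) * (-1) := mul_le_mul_of_nonneg_left (by omega) (by linarith)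
          linarith
      lift t to ℕ using ht0 with k
      have hval : n = n0 + k * P := by
        have : (n:ℤ) = (n0:ℤ) + (k:ℕ) * (P:ℤ) := by push_cast; linarith [ht]
        exact_mod_cast this
      have hkq : k < q := by
        by_contra h
        push_neg at h
        have hq0 : (q:ℤ) ≤ (k:ℤ) := by exact_mod_cast h
        have h2 : (P:ℤ) * q ≤ (P:ℤ) * k := mul_le_mul_of_nonneg_left hq0 (by linarith)
        have h3 : (k:ℤ) * (P:ℤ) = (P:ℤ) * k := mul_comm _ _
        linarith [ht]
      refine ⟨k, ⟨hkq, ?_⟩, by omega⟩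
      rintro ⟨c, hcB, hhit⟩
      exact huncovB c hcB (by rw [hval]; exact hhit)
    · rintro ⟨k, ⟨hkq, hnohit⟩, rfl⟩
      have hn01 : 1 ≤ n0 := (Finset.mem_Icc.mp hn0mem.1).1
      have hn0P : n0 ≤ P := (Finset.mem_Icc.mp hn0mem.1).2
      refine ⟨⟨by omega, ?_⟩, ?_⟩
      · calc n0 + k * P ≤ P + k * P := by omega
          _ = (k + 1) * P := by ring
          _ ≤ q * P := Nat.mul_le_mul_right P (by omega)
          _ = P * q := mul_comm q P
      · intro c hcmem
        rcases hcmem with hcA | hcB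
        · have hdvd : c.2 ∣ k * P := Dvd.dvd.mul_left (hAdvdP c hcA) k
          have : (n0 + k * P) % c.2 = n0 % c.2 := by
            obtain ⟨d, hd⟩ := hdvd
            rw [hd, Nat.add_mul_mod_self_left]
          rw [this]
          exact hn0mem.2 c hcA
        · exact fun h => hnohit ⟨c, hcB, h⟩
  have : lam C r p α (s+1) 1 = T.card := by
    rw [lam]
    rw [show (∏ i ∈ Finset.Ico 1 (s+1), p i ^ α i) * p (s+1) ^ 1 = P * q by rw [hP, hqdef]; ring]
    convert (congrArg Finset.card himage).trans ?_ using 3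
    apply Finset.card_image_of_injective
    intro k k' h
    exact Nat.eq_of_mul_eq_mul_right hPpos (Nat.add_left_cancel h)
  rw [this, ← hT'card]
  omega
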